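/- arXiv:0906.3352 — 6 statements merged into one kernel-verified Lean document; each statement's English description precedes it below -/
import Mathlib

section
/- Let N be a positive integer, let Z be an N×N Hermitian positive semidefinite complex matrix, let c > 0 and x > 0 be reals, and let s ∈ ℂ^N with ‖s‖ = 1. Then the (real) quadratic forms satisfy s^H (Z + c·I)^{-1} (Z + x·I)^{-1} (Z + c·I)^{-1} s ≥ (s^H (Z + x·I)^{-1} s) · (s^H (Z + c·I)^{-2} s). -/
open Matrix ComplexOrder

/-- Weighted Chebyshev / comonotone correlation inequality. -/
lemma cheb_aux {N : ℕ} (p f g : Fin N → ℝ) (hp : ∀ i, 0 ≤ p i)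
    (hp1 : ∑ i, p i = 1) (hfg : ∀ i j, 0 ≤ (f i - f j) * (g i - g j)) :
    (∑ i, p i * f i) * (∑ i, p i * g i) ≤ ∑ i, p i * (f i * g i) := by
  set F := ∑ i, p i * f i with hF
  set G := ∑ i, p i * g i with hG
  set E := ∑ i, p i * (f i * g i) with hE
  have key : (0:ℝ) ≤ ∑ i, ∑ j, p i * p j * ((f i - f j) * (g i - g j)) := by
    apply Finset.sum_nonneg; intro i _
    apply Finset.sum_nonneg; intro j _
    exact mul_nonneg (mul_nonneg (hp i) (hp j)) (hfg i j)
  have inner : ∀ i, ∑ j, p i * p j * ((f i - f j) * (g i - g j))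
      = p i * (f i * g i) - (p i * f i) * G - (p i * g i) * F + p i * E := by
    intro i
    have h1 : ∀ j, p i * p j * ((f i - f j) * (g i - g j))
        = (p i * (f i * g i)) * p j - (p i * f i) * (p j * g j)
          - (p i * g i) * (p j * f j) + p i * (p j * (f j * g j)) := fun j => by ring
    rw [Finset.sum_congr rfl (fun j _ => h1 j)]
    rw [Finset.sum_add_distrib, Finset.sum_sub_distrib, Finset.sum_sub_distrib,
      ← Finset.mul_sum, ← Finset.mul_sum, ← Finset.mul_sum, ← Finset.mul_sum, hp1]
    ring
  rw [Finset.sum_congr rfl (fun i _ => inner i), Finset.sum_add_distrib,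
    Finset.sum_sub_distrib, Finset.sum_sub_distrib, ← Finset.sum_mul, ← Finset.sum_mul,
    ← Finset.sum_mul, hp1, ← hF, ← hG, ← hE] at key
  nlinarith [key]

lemma quad_aux {N : ℕ} (U : Matrix (Fin N) (Fin N) ℂ) (s : Fin N → ℂ)
    (d : Fin N → ℝ) :
    (star s ⬝ᵥ ((U * diagonal (fun i => (d i : ℂ)) * Uᴴ) *ᵥ s)).re
      = ∑ i, d i * Complex.normSq ((Uᴴ *ᵥ s) i) := by
  set v := Uᴴ *ᵥ s with hv
  have h1 : (U * diagonal (fun i => (d i : ℂ)) * Uᴴ) *ᵥ s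
      = U *ᵥ (diagonal (fun i => (d i : ℂ)) *ᵥ v) := by
    rw [hv, mulVec_mulVec, mulVec_mulVec]
  rw [h1, dotProduct_mulVec]
  have h2 : star s ᵥ* U = star v := by
    rw [hv, star_mulVec, conjTranspose_conjTranspose]
  rw [h2]
  have h3 : star v ⬝ᵥ (diagonal (fun i => (d i : ℂ)) *ᵥ v)
      = ∑ i, (starRingEnd ℂ) (v i) * ((d i : ℂ) * v i) := by
    simp [dotProduct, mulVec_diagonal]
  rw [h3, Complex.re_sum]
  refine Finset.sum_congr rfl fun i _ => ?_
  simp [Complex.normSq_apply, Complex.mul_re, Complex.mul_im]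
  ring

/-- For a Hermitian positive semidefinite `Z`, positive reals `c, x`, and a unit-norm
vector `s`, the quadratic forms (which are real) satisfy
`sᴴ (Z + c I)⁻¹ (Z + x I)⁻¹ (Z + c I)⁻¹ s ≥ (sᴴ (Z + x I)⁻¹ s) (sᴴ (Z + c I)⁻² s)`. -/
theorem quadratic_form_inequality {N : ℕ} (hN : 0 < N)
    (Z : Matrix (Fin N) (Fin N) ℂ) (hZ : Z.PosSemidef)
    (c x : ℝ) (hc : 0 < c) (hx : 0 < x)
    (s : Fin N → ℂ) (hs : star s ⬝ᵥ s = 1) :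
    (star s ⬝ᵥ (((Z + (c : ℂ) • 1)⁻¹ * (Z + (x : ℂ) • 1)⁻¹ * (Z + (c : ℂ) • 1)⁻¹) *ᵥ s)).re ≥
      (star s ⬝ᵥ ((Z + (x : ℂ) • 1)⁻¹ *ᵥ s)).re *
        (star s ⬝ᵥ (((Z + (c : ℂ) • 1)⁻¹ * (Z + (c : ℂ) • 1)⁻¹) *ᵥ s)).re := by
  have hH : Z.IsHermitian := hZ.1
  set U : Matrix (Fin N) (Fin N) ℂ := (hH.eigenvectorUnitary : Matrix (Fin N) (Fin N) ℂ) with hU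
  have hUU : U * Uᴴ = 1 := by
    rw [← Matrix.star_eq_conjTranspose]
    exact Matrix.mem_unitaryGroup_iff.mp hH.eigenvectorUnitary.2
  have hUU' : Uᴴ * U = 1 := by
    rw [← Matrix.star_eq_conjTranspose]
    exact Matrix.mem_unitaryGroup_iff'.mp hH.eigenvectorUnitary.2
  set lam : Fin N → ℝ := hH.eigenvalues with hlamdef
  have hlam : ∀ i, 0 ≤ lam i := hZ.eigenvalues_nonneg
  -- multiplication of conjugated diagonals
  have hmul : ∀ d e : Fin N → ℂ, (U * diagonal d * Uᴴ) * (U * diagonal e * Uᴴ)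
      = U * diagonal (fun i => d i * e i) * Uᴴ := by
    intro d e
    simp only [mul_assoc]
    rw [← mul_assoc Uᴴ U, hUU', one_mul, ← mul_assoc (diagonal d), diagonal_mul_diagonal]
  -- spectral form of the shifted matrices
  have hZeq : ∀ t : ℝ, Z + (t : ℂ) • 1 = U * diagonal (fun i => ((lam i + t : ℝ) : ℂ)) * Uᴴ := by
    intro t
    have h1 : (t : ℂ) • (1 : Matrix (Fin N) (Fin N) ℂ)
        = U * diagonal (fun _ => (t : ℂ)) * star U := by
      rw [← smul_one_eq_diagonal, Matrix.star_eq_conjTranspose]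
      rw [Matrix.mul_smul, mul_one, Matrix.smul_mul, hUU]
    have hfun : (fun i => (RCLike.ofReal ∘ hH.eigenvalues : Fin N → ℂ) i + (t : ℂ))
        = fun i => ((lam i + t : ℝ) : ℂ) := by
      funext i
      simp [hlamdef, Function.comp, Complex.ofReal_add]
    rw [hH.spectral_theorem, Unitary.conjStarAlgAut_apply, h1, ← add_mul, ← mul_add, diagonal_add]
    show (_ * diagonal (fun i => (RCLike.ofReal ∘ hH.eigenvalues : Fin N → ℂ) i + (t : ℂ))) * _ = _
    rw [hfun, Matrix.star_eq_conjTranspose, ← hU]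
  have hinv : ∀ t : ℝ, 0 < t →
      (Z + (t : ℂ) • 1)⁻¹ = U * diagonal (fun i => (((lam i + t)⁻¹ : ℝ) : ℂ)) * Uᴴ := by
    intro t ht
    apply inv_eq_right_inv
    rw [hZeq t, hmul]
    have : (fun i => ((lam i + t : ℝ) : ℂ) * (((lam i + t)⁻¹ : ℝ) : ℂ)) = fun _ => (1 : ℂ) := by
      funext i
      rw [← Complex.ofReal_mul, mul_inv_cancel₀ (ne_of_gt (by have := hlam i; linarith)), Complex.ofReal_one]
    rw [this, diagonal_one, mul_one, hUU]
  set a : Fin N → ℝ := fun i => (lam i + c)⁻¹ with ha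
  set b : Fin N → ℝ := fun i => (lam i + x)⁻¹ with hb
  set v : Fin N → ℂ := Uᴴ *ᵥ s with hv
  set p : Fin N → ℝ := fun i => Complex.normSq (v i) with hpdef
  have hp : ∀ i, 0 ≤ p i := fun i => Complex.normSq_nonneg _
  have hp1 : ∑ i, p i = 1 := by
    have h1 := quad_aux U s (fun _ => (1 : ℝ))
    have h2 : U * diagonal (fun i => ((1 : ℝ) : ℂ)) * Uᴴ = 1 := by
      simp only [Complex.ofReal_one, diagonal_one, mul_one, hUU]
    rw [h2, one_mulVec, hs] at h1
    simpa using h1.symm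
  -- the three quadratic forms
  have hformL : (star s ⬝ᵥ (((Z + (c : ℂ) • 1)⁻¹ * (Z + (x : ℂ) • 1)⁻¹ * (Z + (c : ℂ) • 1)⁻¹)
      *ᵥ s)).re = ∑ i, p i * (b i * (a i * a i)) := by
    rw [hinv c hc, hinv x hx, hmul, hmul]
    have : (fun i => (((lam i + c)⁻¹ : ℝ) : ℂ) * (((lam i + x)⁻¹ : ℝ) : ℂ)
        * (((lam i + c)⁻¹ : ℝ) : ℂ)) = fun i => ((a i * b i * a i : ℝ) : ℂ) := by
      funext i; simp only [ha, hb]; push_cast; ring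
    rw [this, quad_aux]
    exact Finset.sum_congr rfl fun i _ => by ring
  have hformB : (star s ⬝ᵥ ((Z + (x : ℂ) • 1)⁻¹ *ᵥ s)).re = ∑ i, p i * b i := by
    rw [hinv x hx, quad_aux]
    exact Finset.sum_congr rfl fun i _ => by ring
  have hformA : (star s ⬝ᵥ (((Z + (c : ℂ) • 1)⁻¹ * (Z + (c : ℂ) • 1)⁻¹) *ᵥ s)).re
      = ∑ i, p i * (a i * a i) := by
    rw [hinv c hc, hmul]
    have : (fun i => (((lam i + c)⁻¹ : ℝ) : ℂ) * (((lam i + c)⁻¹ : ℝ) : ℂ))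
        = fun i => ((a i * a i : ℝ) : ℂ) := by
      funext i; simp only [ha]; push_cast; ring
    rw [this, quad_aux]
    exact Finset.sum_congr rfl fun i _ => by ring
  rw [hformL, hformB, hformA]
  -- comonotonicity
  have hfg : ∀ i j, 0 ≤ (b i - b j) * ((a i * a i) - (a j * a j)) := by
    intro i j
    have hai : 0 < lam i + c := by have := hlam i; linarith
    have haj : 0 < lam j + c := by have := hlam j; linarith
    have hbi : 0 < lam i + x := by have := hlam i; linarith
    have hbj : 0 < lam j + x := by have := hlam j; linarith
    rcases le_total (lam i) (lam j) with h | h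
    · have h1 : b j ≤ b i := by
        apply inv_anti₀ hbi; linarith
      have h2 : a j ≤ a i := by
        apply inv_anti₀ hai; linarith
      have h3 : 0 ≤ a j := le_of_lt (by positivity)
      have h4 : a j * a j ≤ a i * a i := mul_le_mul h2 h2 h3 (le_trans h3 h2)
      exact mul_nonneg (by linarith) (by linarith)
    · have h1 : b i ≤ b j := by
        apply inv_anti₀ hbj; linarith
      have h2 : a i ≤ a j := by
        apply inv_anti₀ haj; linarith
      have h3 : 0 ≤ a i := le_of_lt (by positivity)
      have h4 : a i * a i ≤ a j * a j := mul_le_mul h2 h2 h3 (le_trans h3 h2)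
      nlinarith
  exact cheb_aux p b (fun i => a i * a i) hp hp1 hfg
end

section
/- Let M and K be positive integers with K ≤ M, let S ∈ ℂ^{M×K} have unit-norm, linearly independent columns s_1,…,s_K, let a_1,…,a_K > 0, let A = diag(a_1²,…,a_K²), let σ² > 0, and set M_a = S A S^H + σ²·I_M. If every column s_k of S is an eigenvector of M_a, then S^H S = I_K, i.e. the columns of S are orthonormal. -/
open Matrix

/-- If `K ≤ M`, the columns of `S` are unit-norm and linearly independent and each
column is an eigenvector of `M_a = S A Sᴴ + σ² I`, then the columns of `S` are
orthonormal: `Sᴴ S = I_K`. -/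
theorem fixed_point_columns_orthonormal {M K : ℕ} (hM : 0 < M) (hK : 0 < K)
    (hKM : K ≤ M)
    (S : Matrix (Fin M) (Fin K) ℂ)
    (hScols : ∀ j, star (Sᵀ j) ⬝ᵥ (Sᵀ j) = 1)
    (hSli : LinearIndependent ℂ (fun j => Sᵀ j))
    (a : Fin K → ℝ) (ha : ∀ j, 0 < a j)
    (A : Matrix (Fin K) (Fin K) ℂ) (hA : A = Matrix.diagonal fun j => ((a j) ^ 2 : ℂ))
    (σ2 : ℝ) (hσ2 : 0 < σ2)
    (Ma : Matrix (Fin M) (Fin M) ℂ) (hMa : Ma = S * A * Sᴴ + (σ2 : ℂ) • 1)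
    (heig : ∀ k, ∃ μ : ℂ, Ma *ᵥ (Sᵀ k) = μ • (Sᵀ k)) :
    Sᴴ * S = 1 := by
  -- injectivity of x ↦ S *ᵥ x from linear independence of columns
  have hSinj : ∀ x y : Fin K → ℂ, S *ᵥ x = S *ᵥ y → x = y := by
    intro x y hxy
    have h0 : ∑ i, (x - y) i • Sᵀ i = 0 := by
      funext m
      have hx := congrFun hxy m
      simp only [mulVec, dotProduct] at hx
      simp only [Finset.sum_apply, Pi.smul_apply, transpose_apply, Pi.sub_apply,
        smul_eq_mul, sub_mul, Finset.sum_sub_distrib, Pi.zero_apply, sub_eq_zero]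
      simpa [mul_comm] using hx
    have hz := linearIndependent_iff'.mp hSli Finset.univ ((x - y) ·) h0
    funext i
    have := hz i (Finset.mem_univ i)
    simpa [sub_eq_zero] using this
  ext j k
  obtain ⟨μ, hμ⟩ := heig k
  set c : ℂ := μ - (σ2 : ℂ) with hc
  have hstep : S *ᵥ (A *ᵥ (Sᴴ *ᵥ Sᵀ k)) = S *ᵥ (Pi.single k c) := by
    have h1 : (S * A * Sᴴ) *ᵥ Sᵀ k = c • Sᵀ k := by
      have : (S * A * Sᴴ) *ᵥ Sᵀ k + (σ2 : ℂ) • Sᵀ k = μ • Sᵀ k := by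
        have := hμ
        rw [hMa] at this
        simpa [add_mulVec, smul_mulVec, one_mulVec] using this
      have := congrArg (fun v => v - (σ2 : ℂ) • Sᵀ k) this
      simpa [hc, sub_smul, add_sub_cancel_right] using this
    have h2 : S *ᵥ (A *ᵥ (Sᴴ *ᵥ Sᵀ k)) = c • Sᵀ k := by
      rw [mulVec_mulVec, mulVec_mulVec]; exact h1
    rw [h2]
    funext m
    simp [mulVec, dotProduct, Pi.single_apply, mul_comm]
  have hw : A *ᵥ (Sᴴ *ᵥ Sᵀ k) = Pi.single k c := hSinj _ _ hstep
  have hwj := congrFun hw j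
  have hcol : (Sᴴ *ᵥ Sᵀ k) j = (Sᴴ * S) j k := by
    simp [mulVec, dotProduct, Matrix.mul_apply]
  rw [hA] at hwj
  simp only [mulVec_diagonal, hcol] at hwj
  by_cases hjk : j = k
  · subst hjk
    have := hScols j
    have h11 : (Sᴴ * S) j j = 1 := by
      simpa [Matrix.mul_apply, dotProduct] using this
    simp [h11]
  · have hz : ((a j : ℂ) ^ 2) * (Sᴴ * S) j k = 0 := by
      simpa [Pi.single_apply, hjk] using hwj
    have haj : ((a j : ℂ) ^ 2) ≠ 0 :=
      pow_ne_zero 2 (Complex.ofReal_ne_zero.mpr (ha j).ne')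
    have := (mul_eq_zero.mp hz).resolve_left haj
    simp [this, one_apply, hjk]
end

section
/- For all v_a, w_a ∈ 𝒱, the Hermitian inner product v_a^H w_a is a real number lying in [−1, 1]; moreover the function d(S', S'') = max_{k=1,…,K} arccos(s'_k{}^H s''_k), where s'_k and s''_k are the k-th columns of S' and S'', is a metric on 𝒮 (in particular it satisfies the triangle inequality). -/
open Matrix Real
local notation "⟪" x ", " y "⟫" => @inner ℝ _ _ x y

private lemma arccos_triangle' {E : Type*} [NormedAddCommGroup E] [InnerProductSpace ℝ E]
    {x y z : E} (hx : ‖x‖ = 1) (hy : ‖y‖ = 1) (hz : ‖z‖ = 1) :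
    Real.arccos ⟪x, z⟫ ≤ Real.arccos ⟪x, y⟫ + Real.arccos ⟪y, z⟫ := by
  set a : ℝ := ⟪x, y⟫ with ha
  set b : ℝ := ⟪y, z⟫ with hb
  set c : ℝ := ⟪x, z⟫ with hc
  have haa : |a| ≤ 1 := by
    have := abs_real_inner_le_norm x y; rwa [hx, hy, mul_one] at this
  have hbb : |b| ≤ 1 := by
    have := abs_real_inner_le_norm y z; rwa [hy, hz, mul_one] at this
  rcases le_or_gt π (arccos a + arccos b) with hπ | hπ
  · exact (Real.arccos_le_pi c).trans hπ
  · have h1 : ‖x - a • y‖ ^ 2 = 1 - a ^ 2 := by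
      rw [norm_sub_sq_real, real_inner_smul_right, norm_smul, hx, hy, Real.norm_eq_abs,
        mul_one, ← ha]
      rw [sq_abs]; ring
    have h2 : ‖z - b • y‖ ^ 2 = 1 - b ^ 2 := by
      rw [norm_sub_sq_real, real_inner_smul_right, norm_smul, hz, hy, Real.norm_eq_abs,
        mul_one, real_inner_comm, ← hb]
      rw [sq_abs]; ring
    have hna : ‖x - a • y‖ = Real.sqrt (1 - a ^ 2) := by
      rw [← h1, Real.sqrt_sq (norm_nonneg _)]
    have hnb : ‖z - b • y‖ = Real.sqrt (1 - b ^ 2) := by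
      rw [← h2, Real.sqrt_sq (norm_nonneg _)]
    have hinner : ⟪x - a • y, z - b • y⟫ = c - a * b := by
      rw [inner_sub_left, inner_sub_right, inner_sub_right, real_inner_smul_left,
        real_inner_smul_left, real_inner_smul_right, real_inner_smul_right,
        real_inner_self_eq_norm_sq, hy,
        ← ha, ← hb, ← hc]
      ring
    have hCS := abs_real_inner_le_norm (x - a • y) (z - b • y)
    rw [hinner, hna, hnb] at hCS
    have hkey : a * b - Real.sqrt (1 - a ^ 2) * Real.sqrt (1 - b ^ 2) ≤ c := by
      have := neg_abs_le (c - a * b)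
      nlinarith [hCS]
    have hcos : Real.cos (arccos a + arccos b) ≤ c := by
      rw [Real.cos_add, Real.cos_arccos (neg_le_of_abs_le haa) (le_of_abs_le haa),
        Real.cos_arccos (neg_le_of_abs_le hbb) (le_of_abs_le hbb),
        Real.sin_arccos, Real.sin_arccos]
      exact hkey
    calc arccos c ≤ arccos (Real.cos (arccos a + arccos b)) := by
          simp only [Real.arccos]
          exact sub_le_sub_left (Real.monotone_arcsin hcos) _
      _ = arccos a + arccos b :=
          Real.arccos_cos (add_nonneg (arccos_nonneg a) (arccos_nonneg b)) hπ.le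

open ComplexConjugate in
private lemma arccos_re_inner_triangle {E : Type*} [NormedAddCommGroup E] [InnerProductSpace ℂ E]
    {x y z : E} (hx : ‖x‖ = 1) (hy : ‖y‖ = 1) (hz : ‖z‖ = 1) :
    Real.arccos (@inner ℂ _ _ x z).re ≤
      Real.arccos (@inner ℂ _ _ x y).re + Real.arccos (@inner ℂ _ _ y z).re := by
  letI : InnerProductSpace ℝ E := InnerProductSpace.complexToReal
  have h := arccos_triangle' (x := x) (y := y) (z := z) hx hy hz
  have e1 : ∀ u v : E, (@inner ℝ E _ u v) = (@inner ℂ E _ u v).re := fun u v => by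
    rw [real_inner_eq_re_inner ℂ u v, RCLike.re_to_complex]
  rwa [e1, e1, e1] at h


/-- The set `𝒱` of augmented unit vectors: vectors of `ℂ^{2N}` of the form
`(v; v̄)` (a vector stacked over its componentwise conjugate) with unit norm. -/
def AugUnitVec (N : ℕ) : Set ((Fin N ⊕ Fin N) → ℂ) :=
  {w | (∃ v : Fin N → ℂ, w = Sum.elim v (star v)) ∧ star w ⬝ᵥ w = 1}

/-- The set `𝒮` of `2N × K` complex matrices all of whose columns lie in `𝒱`. -/
def AugSigSet (N K : ℕ) : Set (Matrix (Fin N ⊕ Fin N) (Fin K) ℂ) :=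
  {S | ∀ k, Sᵀ k ∈ AugUnitVec N}

/-- `d(S', S'') = max_k arccos (s'ₖᴴ s''ₖ)` (the inner products being real
for matrices in `𝒮`). -/
noncomputable def augDist {N K : ℕ} (hK : 0 < K)
    (S' S'' : Matrix (Fin N ⊕ Fin N) (Fin K) ℂ) : ℝ :=
  Finset.univ.sup' (Finset.univ_nonempty_iff.mpr ⟨⟨0, hK⟩⟩)
    fun k => Real.arccos ((star (S'ᵀ k) ⬝ᵥ (S''ᵀ k)).re)

/-- For augmented unit vectors the Hermitian inner product is real and lies in
`[-1, 1]`, and `d(S', S'') = max_k arccos (s'ₖᴴ s''ₖ)` is a metric on `𝒮`. -/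
theorem augDist_is_metric {N K : ℕ} (hN : 0 < N) (hK : 0 < K) :
    (∀ v ∈ AugUnitVec N, ∀ w ∈ AugUnitVec N,
      (star v ⬝ᵥ w).im = 0 ∧ -1 ≤ (star v ⬝ᵥ w).re ∧ (star v ⬝ᵥ w).re ≤ 1) ∧
    (∀ S ∈ AugSigSet N K, ∀ S' ∈ AugSigSet N K, 0 ≤ augDist hK S S') ∧
    (∀ S ∈ AugSigSet N K, ∀ S' ∈ AugSigSet N K, (augDist hK S S' = 0 ↔ S = S')) ∧
    (∀ S ∈ AugSigSet N K, ∀ S' ∈ AugSigSet N K, augDist hK S S' = augDist hK S' S) ∧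
    (∀ S ∈ AugSigSet N K, ∀ S' ∈ AugSigSet N K, ∀ S'' ∈ AugSigSet N K,
      augDist hK S S'' ≤ augDist hK S S' + augDist hK S' S'') := by
  classical
  have hinner : ∀ v w : (Fin N ⊕ Fin N) → ℂ,
      (@inner ℂ _ _ ((WithLp.equiv 2 ((Fin N ⊕ Fin N) → ℂ)).symm v)
        ((WithLp.equiv 2 ((Fin N ⊕ Fin N) → ℂ)).symm w)) = star v ⬝ᵥ w := fun v w => by
    simp [PiLp.inner_apply, dotProduct, mul_comm]
  have hnorm : ∀ v ∈ AugUnitVec N, ‖(WithLp.equiv 2 ((Fin N ⊕ Fin N) → ℂ)).symm v‖ = 1 := by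
    intro v hv
    rw [norm_eq_sqrt_re_inner (𝕜 := ℂ), hinner, hv.2]
    simp
  have him : ∀ v ∈ AugUnitVec N, ∀ w ∈ AugUnitVec N, (star v ⬝ᵥ w).im = 0 := by
    rintro v ⟨⟨v0, rfl⟩, -⟩ w ⟨⟨w0, rfl⟩, -⟩
    simp only [dotProduct, Fintype.sum_sum_type, Pi.star_apply, Sum.elim_inl,
      Sum.elim_inr, Complex.add_im, Complex.im_sum, star_star]
    rw [← Finset.sum_add_distrib]
    apply Finset.sum_eq_zero
    intro i _
    simp [Complex.mul_im]
    ring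
  have habs : ∀ v ∈ AugUnitVec N, ∀ w ∈ AugUnitVec N, |(star v ⬝ᵥ w).re| ≤ 1 := by
    intro v hv w hw
    have h := norm_inner_le_norm (𝕜 := ℂ) ((WithLp.equiv 2 ((Fin N ⊕ Fin N) → ℂ)).symm v)
      ((WithLp.equiv 2 ((Fin N ⊕ Fin N) → ℂ)).symm w)
    rw [hnorm v hv, hnorm w hw, mul_one, hinner] at h
    exact (Complex.abs_re_le_norm _).trans h
  have hnonneg : ∀ S S' : Matrix (Fin N ⊕ Fin N) (Fin K) ℂ, 0 ≤ augDist hK S S' := by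
    intro S S'
    unfold augDist
    exact le_trans (Real.arccos_nonneg _)
      (Finset.le_sup' (fun k => Real.arccos ((star (Sᵀ k) ⬝ᵥ S'ᵀ k).re))
        (Finset.mem_univ (⟨0, hK⟩ : Fin K)))
  refine ⟨?_, ?_, ?_, ?_, ?_⟩
  · intro v hv w hw
    refine ⟨him v hv w hw, ?_, ?_⟩
    · exact neg_le_of_abs_le (habs v hv w hw)
    · exact le_of_abs_le (habs v hv w hw)
  · intro S _ S' _; exact hnonneg S S'
  · intro S hS S' hS'
    constructor
    · intro h
      have hcols : ∀ k, Sᵀ k = S'ᵀ k := by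
        intro k
        have hle : Real.arccos ((star (Sᵀ k) ⬝ᵥ S'ᵀ k).re) ≤ 0 := by
          rw [← h]
          unfold augDist
          exact Finset.le_sup' (fun k => Real.arccos ((star (Sᵀ k) ⬝ᵥ S'ᵀ k).re))
            (Finset.mem_univ k)
        have h0 : Real.arccos ((star (Sᵀ k) ⬝ᵥ S'ᵀ k).re) = 0 :=
          le_antisymm hle (Real.arccos_nonneg _)
        have h1 : 1 ≤ (star (Sᵀ k) ⬝ᵥ S'ᵀ k).re := Real.arccos_eq_zero.mp h0
        have h2 : (star (Sᵀ k) ⬝ᵥ S'ᵀ k).re ≤ 1 := le_of_abs_le (habs _ (hS k) _ (hS' k))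
        have hone : star (Sᵀ k) ⬝ᵥ S'ᵀ k = 1 :=
          Complex.ext (le_antisymm h2 h1) (by simpa using him _ (hS k) _ (hS' k))
        have hone' : (@inner ℂ _ _ ((WithLp.equiv 2 ((Fin N ⊕ Fin N) → ℂ)).symm (Sᵀ k))
            ((WithLp.equiv 2 ((Fin N ⊕ Fin N) → ℂ)).symm (S'ᵀ k))) = 1 := by
          rw [hinner]; exact hone
        have := (inner_eq_one_iff_of_norm_eq_one (hnorm _ (hS k)) (hnorm _ (hS' k))).mp hone'
        exact (WithLp.equiv 2 ((Fin N ⊕ Fin N) → ℂ)).symm.injective this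
      have hT : Sᵀ = S'ᵀ := funext hcols
      calc S = Sᵀᵀ := (Matrix.transpose_transpose S).symm
        _ = S'ᵀᵀ := by rw [hT]
        _ = S' := Matrix.transpose_transpose S'
    · rintro rfl
      refine le_antisymm ?_ (hnonneg S S)
      unfold augDist
      apply Finset.sup'_le
      intro k _
      rw [(hS k).2]
      simp [Real.arccos_one]
  · intro S hS S' hS'
    have hfun : ∀ k : Fin K,
        Real.arccos ((star (Sᵀ k) ⬝ᵥ S'ᵀ k).re) = Real.arccos ((star (S'ᵀ k) ⬝ᵥ Sᵀ k).re) := by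
      intro k
      have hst : star (S'ᵀ k) ⬝ᵥ Sᵀ k = star (star (Sᵀ k) ⬝ᵥ S'ᵀ k) := by
        simp [dotProduct, star_sum, mul_comm]
      rw [hst]
      simp [Complex.conj_re]
    unfold augDist
    exact Finset.sup'_congr _ rfl fun k _ => hfun k
  · intro S hS S' hS' S'' hS''
    unfold augDist
    apply Finset.sup'_le
    intro k _
    have htri := arccos_re_inner_triangle (E := EuclideanSpace ℂ (Fin N ⊕ Fin N))
      (hnorm _ (hS k)) (hnorm _ (hS' k)) (hnorm _ (hS'' k))
    rw [hinner, hinner, hinner] at htri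
    refine le_trans htri (add_le_add ?_ ?_)
    · exact Finset.le_sup' (fun k => Real.arccos ((star (Sᵀ k) ⬝ᵥ S'ᵀ k).re))
        (Finset.mem_univ k)
    · exact Finset.le_sup' (fun k => Real.arccos ((star (S'ᵀ k) ⬝ᵥ S''ᵀ k).re))
        (Finset.mem_univ k)
end

section
/- Let K and N be positive integers and let c_1,…,c_K be positive reals. Then the set of indices i such that 2N − #{j : c_j ≥ c_i} > 0 and c_i > (∑_{j : c_j < c_i} c_j) / (2N − #{j : c_j ≥ c_i}) has cardinality at most 2N − 1, i.e. in a widely-linear system there can be at most 2N − 1 oversized users. -/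
open scoped Classical

/-- In a widely-linear system (effective processing gain `2N`) there can be at most
`2N - 1` oversized users, where user `i` is oversized if `2N - #{j : cⱼ ≥ cᵢ} > 0`
and `cᵢ > (∑_{j : cⱼ < cᵢ} cⱼ) / (2N - #{j : cⱼ ≥ cᵢ})`. -/
theorem card_oversized_users_le {K N : ℕ} (hK : 0 < K) (hN : 0 < N)
    (c : Fin K → ℝ) (hc : ∀ j, 0 < c j) :
    (Finset.univ.filter (fun i : Fin K =>
        (Finset.univ.filter (fun j => c i ≤ c j)).card < 2 * N ∧
        (∑ j ∈ Finset.univ.filter (fun j => c j < c i), c j) /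
          ((2 * N : ℝ) - (Finset.univ.filter (fun j => c i ≤ c j)).card) < c i)).card ≤
      2 * N - 1 := by
  set S : Finset (Fin K) := Finset.univ.filter (fun i : Fin K =>
      (Finset.univ.filter (fun j => c i ≤ c j)).card < 2 * N) with hS
  have hsub : (Finset.univ.filter (fun i : Fin K =>
        (Finset.univ.filter (fun j => c i ≤ c j)).card < 2 * N ∧
        (∑ j ∈ Finset.univ.filter (fun j => c j < c i), c j) /
          ((2 * N : ℝ) - (Finset.univ.filter (fun j => c i ≤ c j)).card) < c i)) ⊆ S := by
    intro i hi
    simp only [hS, Finset.mem_filter] at hi ⊢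
    exact ⟨hi.1, hi.2.1⟩
  refine le_trans (Finset.card_le_card hsub) ?_
  rcases S.eq_empty_or_nonempty with h | h
  · simp [h]
  · obtain ⟨i, hiS, hmin⟩ := S.exists_min_image c h
    have hi : (Finset.univ.filter (fun j => c i ≤ c j)).card < 2 * N := by
      simpa [hS] using hiS
    have hsub2 : S ⊆ Finset.univ.filter (fun j => c i ≤ c j) := by
      intro j hj
      simp only [Finset.mem_filter, Finset.mem_univ, true_and]
      exact hmin j hj
    have := Finset.card_le_card hsub2
    omega
end

section
/- Let f be the map that sends a matrix S_a ∈ 𝒮, whose k-th column is (v_k; v̄_k) with v_k ∈ ℂ^N and ‖v_k‖² = 1/2, to the real matrix S_r ∈ ℝ^{2N×K} whose k-th column is √2·(Re v_k; Im v_k). Then f is a bijection from 𝒮 onto the set of real 2N×K matrices with unit-norm columns, and for every S_a ∈ 𝒮 the Gram matrices coincide: every entry of S_a^H S_a is real and S_a^H S_a = f(S_a)^T f(S_a). -/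
open Matrix

/-- The map sending an augmented matrix whose `k`-th column is `(vₖ; v̄ₖ)` to the
real matrix whose `k`-th column is `√2 (Re vₖ; Im vₖ)`. -/
noncomputable def augToReal {N K : ℕ} (S : Matrix (Fin N ⊕ Fin N) (Fin K) ℂ) :
    Matrix (Fin N ⊕ Fin N) (Fin K) ℝ :=
  Matrix.of fun p k =>
    Sum.elim (fun i => Real.sqrt 2 * (S (Sum.inl i) k).re)
      (fun i => Real.sqrt 2 * (S (Sum.inl i) k).im) p

lemma aug_col_conj {N K : ℕ} {S : Matrix (Fin N ⊕ Fin N) (Fin K) ℂ} (hS : S ∈ AugSigSet N K)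
    (k : Fin K) (i : Fin N) : S (Sum.inr i) k = starRingEnd ℂ (S (Sum.inl i) k) := by
  obtain ⟨⟨v, hv⟩, -⟩ := hS k
  have h1 := congrFun hv (Sum.inl i)
  have h2 := congrFun hv (Sum.inr i)
  simp only [Matrix.transpose_apply, Sum.elim_inl, Sum.elim_inr, Pi.star_apply] at h1 h2
  rw [h1, h2]
  rfl

lemma gram_eq {N K : ℕ} {S : Matrix (Fin N ⊕ Fin N) (Fin K) ℂ}
    (hc : ∀ k i, S (Sum.inr i) k = starRingEnd ℂ (S (Sum.inl i) k)) :
    Sᴴ * S = ((augToReal S)ᵀ * augToReal S).map Complex.ofReal := by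
  have h2 : Real.sqrt 2 * Real.sqrt 2 = 2 := Real.mul_self_sqrt (by norm_num)
  ext p q
  simp only [Matrix.mul_apply, Matrix.map_apply, Matrix.conjTranspose_apply,
    Matrix.transpose_apply, augToReal, Matrix.of_apply]
  rw [Fintype.sum_sum_type, Fintype.sum_sum_type]
  simp only [Sum.elim_inl, Sum.elim_inr]
  push_cast
  rw [← Finset.sum_add_distrib, ← Finset.sum_add_distrib]
  apply Finset.sum_congr rfl
  intro i _
  rw [hc p i, hc q i]
  have key : ∀ x y : ℝ, Real.sqrt 2 * x * (Real.sqrt 2 * y) = 2 * (x * y) := by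
    intro x y
    rw [show Real.sqrt 2 * x * (Real.sqrt 2 * y) = Real.sqrt 2 * Real.sqrt 2 * (x * y) by ring, h2]
  apply Complex.ext <;>
      simp only [Complex.mul_re, Complex.mul_im, Complex.add_re, Complex.add_im,
        Complex.ofReal_re, Complex.ofReal_im, Complex.star_def, Complex.conj_re, Complex.conj_im,
        key] <;>
    · have h2' : Real.sqrt 2 ^ 2 = 2 := Real.sq_sqrt (by norm_num)
      ring_nf
      try rw [h2']
      try ring

/-- `augToReal` is a bijection from `𝒮` onto the set of real `2N × K` matrices with
unit-norm columns, and it preserves Gram matrices: every entry of `Sᴴ S` is real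
and `Sᴴ S = f(S)ᵀ f(S)`. -/
theorem augToReal_bijOn_and_gram {N K : ℕ} (hN : 0 < N) (hK : 0 < K) :
    Set.BijOn (augToReal (N := N) (K := K)) (AugSigSet N K)
      {R : Matrix (Fin N ⊕ Fin N) (Fin K) ℝ | ∀ k, (Rᵀ k) ⬝ᵥ (Rᵀ k) = 1} ∧
    ∀ S ∈ AugSigSet N K,
      (∀ p q, ((Sᴴ * S) p q).im = 0) ∧
      Sᴴ * S = ((augToReal S)ᵀ * augToReal S).map Complex.ofReal := by
  have hs0 : Real.sqrt 2 ≠ 0 := by positivity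
  have gram : ∀ S ∈ AugSigSet N K,
      Sᴴ * S = ((augToReal S)ᵀ * augToReal S).map Complex.ofReal :=
    fun S hS => gram_eq (fun k i => aug_col_conj hS k i)
  refine ⟨⟨?_, ?_, ?_⟩, ?_⟩
  · -- MapsTo
    intro S hS
    intro k
    have hdiag : (Sᴴ * S) k k = 1 := by
      have h1 := (hS k).2
      simpa [Matrix.mul_apply, dotProduct, Matrix.conjTranspose_apply,
        Matrix.transpose_apply] using h1
    have := congrFun (congrFun (gram S hS) k) k
    rw [hdiag] at this
    have h2 : (((augToReal S)ᵀ * augToReal S) k k : ℂ) = 1 := by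
      simpa [Matrix.map_apply] using this.symm
    have h3 : ((augToReal S)ᵀ * augToReal S) k k = 1 := by
      exact_mod_cast h2
    simpa [Matrix.mul_apply, dotProduct, Matrix.transpose_apply] using h3
  · -- InjOn
    intro S hS T hT h
    have hcol : ∀ i k, S (Sum.inl i) k = T (Sum.inl i) k := by
      intro i k
      have hre := congrFun (congrFun h (Sum.inl i)) k
      have him := congrFun (congrFun h (Sum.inr i)) k
      simp only [augToReal, Matrix.of_apply, Sum.elim_inl, Sum.elim_inr] at hre him
      exact Complex.ext (mul_left_cancel₀ hs0 hre) (mul_left_cancel₀ hs0 him)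
    ext p k
    cases p with
    | inl i => exact hcol i k
    | inr i => rw [aug_col_conj hS k i, aug_col_conj hT k i, hcol i k]
  · -- SurjOn
    intro R hR
    set T : Matrix (Fin N ⊕ Fin N) (Fin K) ℂ :=
      Matrix.of fun p k =>
        Sum.elim
          (fun i => (((Real.sqrt 2)⁻¹ : ℝ) : ℂ) * (R (Sum.inl i) k + R (Sum.inr i) k * Complex.I))
          (fun i => (((Real.sqrt 2)⁻¹ : ℝ) : ℂ) * (R (Sum.inl i) k - R (Sum.inr i) k * Complex.I))
          p with hT
    have hc : ∀ k i, T (Sum.inr i) k = starRingEnd ℂ (T (Sum.inl i) k) := by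
      intro k i
      simp only [hT, Matrix.of_apply, Sum.elim_inl, Sum.elim_inr, _root_.map_mul, _root_.map_add, map_sub,
        Complex.conj_ofReal, Complex.conj_I]
      ring
    have hfT : augToReal T = R := by
      ext p k
      cases p with
      | inl i =>
        simp only [augToReal, Matrix.of_apply, Sum.elim_inl, hT, Complex.mul_re,
          Complex.ofReal_re, Complex.ofReal_im, Complex.add_re, Complex.add_im, Complex.mul_im,
          Complex.I_re, Complex.I_im]
        field_simp
        ring
      | inr i =>
        simp only [augToReal, Matrix.of_apply, Sum.elim_inr, Sum.elim_inl, hT, Complex.mul_re,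
          Complex.ofReal_re, Complex.ofReal_im, Complex.add_re, Complex.add_im, Complex.mul_im,
          Complex.I_re, Complex.I_im]
        field_simp
        ring
    have hmem : T ∈ AugSigSet N K := by
      intro k
      constructor
      · refine ⟨fun i => T (Sum.inl i) k, ?_⟩
        funext p
        cases p with
        | inl i => rfl
        | inr i => simpa [Matrix.transpose_apply] using hc k i
      · have hg := congrFun (congrFun (gram_eq hc) k) k
        have hdot : star (Tᵀ k) ⬝ᵥ Tᵀ k = (Tᴴ * T) k k := by
          simp [Matrix.mul_apply, dotProduct, Matrix.conjTranspose_apply]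
        rw [hdot, hg, hfT]
        have h4 : ((Rᵀ * R) k k : ℝ) = 1 := by
          simpa [Matrix.mul_apply, dotProduct, Matrix.transpose_apply] using hR k
        simp [Matrix.map_apply, h4]
    exact ⟨T, hmem, hfT⟩
  · intro S hS
    refine ⟨?_, gram S hS⟩
    intro p q
    rw [gram S hS]
    simp [Matrix.map_apply]
end

section
/- Let a_1,…,a_K > 0, let A = diag(a_1²,…,a_K²), and let σ² > 0. Then the supremum over S_a ∈ 𝒮 of the (real) determinant det(I_{2N} + σ^{-2} S_a A S_a^H) equals the supremum over all real matrices S_r ∈ ℝ^{2N×K} with unit-norm columns of det(I_{2N} + σ^{-2} S_r A S_r^T). In terms of sum-capacity, C_{sum,WL} = 2·C_{sum,R}, where C_{sum,WL} = sup_{S_a∈𝒮} log det(I_{2N} + σ^{-2} S_a A S_a^H) and C_{sum,R} = sup_{S_r} (1/2) log det(I_{2N} + σ^{-2} S_r A S_r^T). -/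
open Matrix Pointwise

noncomputable section AuxWL

def cWL : ℂ := ((Real.sqrt 2)⁻¹ : ℝ)

lemma cWL_conj : (starRingEnd ℂ) cWL = cWL := by simp [cWL]

lemma cWL_sq : cWL * cWL = 1/2 := by
  have h : (Real.sqrt 2)⁻¹ * (Real.sqrt 2)⁻¹ = 1/2 := by
    rw [← mul_inv, Real.mul_self_sqrt (by norm_num)]; norm_num
  simp only [cWL, ← Complex.ofReal_mul, h]; norm_num

def UWL (N : ℕ) : Matrix (Fin N ⊕ Fin N) (Fin N ⊕ Fin N) ℂ :=
  Matrix.fromBlocks (cWL • 1) (cWL • 1) ((-(cWL * Complex.I)) • 1) ((cWL * Complex.I) • 1)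

lemma UWL_conjTranspose (N : ℕ) :
    (UWL N)ᴴ = Matrix.fromBlocks (cWL • 1) ((cWL * Complex.I) • 1)
      (cWL • 1) ((-(cWL * Complex.I)) • 1) := by
  simp [UWL, Matrix.fromBlocks_conjTranspose, Matrix.conjTranspose_smul, cWL_conj,
    _root_.map_mul, Complex.conj_I, mul_comm, mul_neg, neg_smul]

lemma UWL_mul_conjTranspose (N : ℕ) : UWL N * (UWL N)ᴴ = 1 := by
  rw [UWL_conjTranspose, UWL, Matrix.fromBlocks_multiply, ← Matrix.fromBlocks_one]
  have h2 : cWL * cWL = 1/2 := cWL_sq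
  have e1 : (cWL • (1:Matrix (Fin N) (Fin N) ℂ)) * (cWL • 1) +
      (cWL • 1) * (cWL • 1) = 1 := by
    simp [Matrix.smul_mul, Matrix.mul_smul, smul_smul, ← add_smul, h2]; norm_num
  have e2 : (cWL • (1:Matrix (Fin N) (Fin N) ℂ)) * ((cWL * Complex.I) • 1) +
      (cWL • 1) * ((-(cWL * Complex.I)) • 1) = 0 := by
    simp [Matrix.smul_mul, Matrix.mul_smul, smul_smul, ← add_smul]
  have e3 : ((-(cWL * Complex.I)) • (1:Matrix (Fin N) (Fin N) ℂ)) * (cWL • 1) +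
      ((cWL * Complex.I) • 1) * (cWL • 1) = 0 := by
    simp [Matrix.smul_mul, Matrix.mul_smul, smul_smul, ← add_smul]
  have e4 : ((-(cWL * Complex.I)) • (1:Matrix (Fin N) (Fin N) ℂ)) * ((cWL * Complex.I) • 1) +
      ((cWL * Complex.I) • 1) * ((-(cWL * Complex.I)) • 1) = 1 := by
    simp only [Matrix.smul_mul, Matrix.mul_smul, smul_smul, ← add_smul, Matrix.one_mul]
    rw [show cWL * Complex.I * -(cWL * Complex.I) + -(cWL * Complex.I) * (cWL * Complex.I)
        = -(cWL*cWL) * (Complex.I*Complex.I) * 2 by ring, Complex.I_mul_I, h2]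
    norm_num
  rw [e1, e2, e3, e4]

lemma UWL_conjTranspose_mul (N : ℕ) : (UWL N)ᴴ * UWL N = 1 :=
  mul_eq_one_comm.mp (UWL_mul_conjTranspose N)

section Aux2
variable {n : Type*} [Fintype n] [DecidableEq n]

set_option linter.unusedSectionVars false

lemma det_conj_one (U M : Matrix n n ℂ) (hU : U * Uᴴ = 1) (r : ℂ) :
    (1 + r • (U * M * Uᴴ)).det = (1 + r • M).det := by
  have h2 : Uᴴ * U = 1 := mul_eq_one_comm.mp hU
  have key : (1 : Matrix n n ℂ) + r • (U * M * Uᴴ) = U * (1 + r • M) * Uᴴ := by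
    rw [Matrix.mul_add, Matrix.add_mul, Matrix.mul_one, hU, Matrix.mul_smul, Matrix.smul_mul,
      Matrix.mul_assoc]
  rw [key, Matrix.det_mul, Matrix.det_mul, mul_comm, ← mul_assoc, ← Matrix.det_mul, h2]
  simp

lemma dot_conj (U : Matrix n n ℂ) (hU : Uᴴ * U = 1) (w : n → ℂ) :
    star (U *ᵥ w) ⬝ᵥ (U *ᵥ w) = star w ⬝ᵥ w := by
  rw [Matrix.star_mulVec, Matrix.dotProduct_mulVec, Matrix.vecMul_vecMul, hU, Matrix.vecMul_one]

lemma col_mul {K : Type*} [Fintype K] (U : Matrix n n ℂ) (S : Matrix n K ℂ) (k : K) :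
    (U * S)ᵀ k = U *ᵥ (Sᵀ k) := by
  funext i
  simp [Matrix.mul_apply, Matrix.mulVec, dotProduct]

lemma map_conjTranspose {K : Type*} (R : Matrix n K ℝ) :
    (R.map (Complex.ofReal))ᴴ = Rᵀ.map (Complex.ofReal) := by
  ext i j
  simp [Matrix.conjTranspose_apply, Matrix.map_apply, Complex.conj_ofReal]

lemma real_dot_cast {K : Type*} (R : Matrix n K ℝ) (k : K) :
    star ((R.map Complex.ofReal)ᵀ k) ⬝ᵥ ((R.map Complex.ofReal)ᵀ k)
      = ((Rᵀ k ⬝ᵥ Rᵀ k : ℝ) : ℂ) := by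
  simp [dotProduct, Matrix.map_apply, Complex.conj_ofReal, ← Complex.ofReal_mul]

lemma map_det_expr (R : Matrix n n ℝ) (σ2 : ℝ) :
    ((1 : Matrix n n ℝ) + σ2⁻¹ • R).map Complex.ofReal
      = (1 : Matrix n n ℂ) + ((σ2 : ℂ))⁻¹ • R.map Complex.ofReal := by
  ext i j
  simp [Matrix.map_apply, Matrix.add_apply, Matrix.smul_apply, Matrix.one_apply]
  split <;> push_cast <;> ring

end Aux2

/-- det of `ofReal`-mapped matrix -/
lemma det_map_ofReal {n : Type*} [Fintype n] [DecidableEq n] (M : Matrix n n ℝ) :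
    (M.map Complex.ofReal).det = (M.det : ℂ) := by
  rw [show (Complex.ofReal : ℝ → ℂ) = ⇑Complex.ofRealHom from rfl,
    ← RingHom.mapMatrix_apply, ← RingHom.map_det]

/-- determinant identity relating the complex and real forms -/
lemma det_re_eq {N K : ℕ} (Sr : Matrix (Fin N ⊕ Fin N) (Fin K) ℝ)
    (Ar : Matrix (Fin K) (Fin K) ℝ)
    (Sa : Matrix (Fin N ⊕ Fin N) (Fin K) ℂ)
    (h : Sa = (UWL N)ᴴ * (Sr.map Complex.ofReal)) (σ2 : ℝ) :
    (((1 : Matrix (Fin N ⊕ Fin N) (Fin N ⊕ Fin N) ℂ) +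
        ((σ2 : ℂ))⁻¹ • (Sa * (Ar.map Complex.ofReal) * Saᴴ)).det).re
      = ((1 : Matrix (Fin N ⊕ Fin N) (Fin N ⊕ Fin N) ℝ) + σ2⁻¹ • (Sr * Ar * Srᵀ)).det := by
  have hSaH : Saᴴ = (Sr.map Complex.ofReal)ᴴ * UWL N := by
    rw [h, Matrix.conjTranspose_mul, Matrix.conjTranspose_conjTranspose]
  have hM : Sa * (Ar.map Complex.ofReal) * Saᴴ
      = (UWL N)ᴴ * ((Sr.map Complex.ofReal) * (Ar.map Complex.ofReal) *
          (Sr.map Complex.ofReal)ᴴ) * ((UWL N)ᴴ)ᴴ := by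
    rw [hSaH, h]
    simp only [Matrix.conjTranspose_conjTranspose, Matrix.mul_assoc]
  rw [hM, det_conj_one _ _ (by
    rw [Matrix.conjTranspose_conjTranspose]; exact UWL_conjTranspose_mul N)]
  have hmap : (Sr.map Complex.ofReal) * (Ar.map Complex.ofReal) * (Sr.map Complex.ofReal)ᴴ
      = (Sr * Ar * Srᵀ).map Complex.ofReal := by
    rw [map_conjTranspose, show (Complex.ofReal : ℝ → ℂ) = ⇑Complex.ofRealHom from rfl]
    simp [Matrix.map_mul]
  rw [hmap, ← map_det_expr, det_map_ofReal]
  simp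

/-- forward direction: each augmented matrix yields a real matrix -/
lemma exists_real_of_aug {N K : ℕ} (Sa : Matrix (Fin N ⊕ Fin N) (Fin K) ℂ)
    (hSa : Sa ∈ AugSigSet N K) :
    ∃ Sr : Matrix (Fin N ⊕ Fin N) (Fin K) ℝ,
      (∀ k, (Srᵀ k) ⬝ᵥ (Srᵀ k) = 1) ∧ Sa = (UWL N)ᴴ * (Sr.map Complex.ofReal) := by
  set W := UWL N * Sa with hWdef
  have hc : ∀ k, ∀ v : Fin N → ℂ, Saᵀ k = Sum.elim v (star v) →
      Wᵀ k = Sum.elim (cWL • v + cWL • (star v))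
        ((-(cWL * Complex.I)) • v + (cWL * Complex.I) • (star v)) := by
    intro k v hv
    rw [hWdef, col_mul, hv, UWL, Matrix.fromBlocks_mulVec]
    simp [Sum.elim_comp_inl, Sum.elim_comp_inr, Matrix.smul_mulVec, Matrix.one_mulVec,
      Matrix.neg_mulVec, neg_smul]
  have hmap : (Matrix.of fun i k => (W i k).re).map Complex.ofReal = W := by
    ext i k
    obtain ⟨⟨v, hv⟩, -⟩ := hSa k
    have hck := hc k v hv
    have hik : W i k = Wᵀ k i := rfl
    apply Complex.ext
    · simp [Matrix.map_apply]
    · simp only [Matrix.map_apply, Matrix.of_apply, Complex.ofReal_im]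
      rw [hik, hck]
      cases i with
      | inl i =>
        simp [Pi.add_apply, Pi.smul_apply, smul_eq_mul, Complex.add_im, Complex.mul_im,
          cWL, Complex.ofReal_re, Complex.ofReal_im, Complex.conj_re, Complex.conj_im]
      | inr i =>
        simp [Pi.add_apply, Pi.smul_apply, smul_eq_mul, Complex.add_im, Complex.mul_im,
          Complex.mul_re, Complex.neg_im, Complex.neg_re, Complex.I_re, Complex.I_im,
          cWL, Complex.ofReal_re, Complex.ofReal_im, Complex.conj_re, Complex.conj_im]
        try ring
  refine ⟨Matrix.of fun i k => (W i k).re, ?_, ?_⟩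
  · intro k
    obtain ⟨⟨v, hv⟩, hnorm⟩ := hSa k
    have h1 : star (Wᵀ k) ⬝ᵥ (Wᵀ k) = 1 := by
      rw [hWdef, col_mul]
      rw [dot_conj (UWL N) (UWL_conjTranspose_mul N) (Saᵀ k)]
      exact hnorm
    have h2 := real_dot_cast (Matrix.of fun i k => (W i k).re) k
    rw [hmap, h1] at h2
    exact_mod_cast h2.symm
  · rw [hmap, hWdef, ← Matrix.mul_assoc, UWL_conjTranspose_mul, Matrix.one_mul]

/-- reverse direction: each real matrix yields an augmented matrix -/
lemma aug_of_real {N K : ℕ} (Sr : Matrix (Fin N ⊕ Fin N) (Fin K) ℝ)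
    (h : ∀ k, (Srᵀ k) ⬝ᵥ (Srᵀ k) = 1) :
    (UWL N)ᴴ * (Sr.map Complex.ofReal) ∈ AugSigSet N K := by
  intro k
  set W := Sr.map Complex.ofReal with hWdef
  have hcol : ((UWL N)ᴴ * W)ᵀ k = (UWL N)ᴴ *ᵥ (Wᵀ k) := col_mul _ _ k
  have hWk : Wᵀ k = Sum.elim (fun i => ((Sr (Sum.inl i) k : ℝ) : ℂ))
      (fun i => ((Sr (Sum.inr i) k : ℝ) : ℂ)) := by
    funext i; cases i <;> rfl
  constructor
  · refine ⟨fun i => cWL * (Sr (Sum.inl i) k : ℂ) + cWL * Complex.I * (Sr (Sum.inr i) k : ℂ), ?_⟩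
    rw [hcol, hWk, UWL_conjTranspose, Matrix.fromBlocks_mulVec]
    simp only [Sum.elim_comp_inl, Sum.elim_comp_inr, Matrix.smul_mulVec,
      Matrix.one_mulVec]
    funext i
    cases i with
    | inl i =>
      simp [Pi.add_apply, Pi.smul_apply, smul_eq_mul]
    | inr i =>
      simp only [Sum.elim_inr, Pi.add_apply, Pi.smul_apply, smul_eq_mul, Pi.star_apply,
        star_add, star_mul', Complex.star_def, _root_.map_mul, Complex.conj_I,
        Complex.conj_ofReal, cWL_conj]
      ring
  · rw [hcol]
    rw [dot_conj ((UWL N)ᴴ) (by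
      rw [Matrix.conjTranspose_conjTranspose]; exact UWL_mul_conjTranspose N) (Wᵀ k)]
    rw [hWdef, real_dot_cast, h k]
    simp

end AuxWL

/-- The supremum over `S_a ∈ 𝒮` of `det (I + σ⁻² S_a A S_aᴴ)` equals the supremum
over all real `2N × K` matrices with unit-norm columns of
`det (I + σ⁻² S_r A S_rᵀ)`; hence `C_{sum,WL} = 2 C_{sum,R}`. -/
theorem wl_sum_capacity_eq_twice_real {N K : ℕ} (hN : 0 < N) (hK : 0 < K)
    (a : Fin K → ℝ) (ha : ∀ j, 0 < a j)
    (A : Matrix (Fin K) (Fin K) ℂ) (hA : A = Matrix.diagonal fun j => ((a j) ^ 2 : ℂ))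
    (Ar : Matrix (Fin K) (Fin K) ℝ) (hAr : Ar = Matrix.diagonal fun j => (a j) ^ 2)
    (σ2 : ℝ) (hσ2 : 0 < σ2) :
    sSup {x : ℝ | ∃ Sa ∈ AugSigSet N K,
        x = ((1 : Matrix (Fin N ⊕ Fin N) (Fin N ⊕ Fin N) ℂ) +
          ((σ2 : ℂ))⁻¹ • (Sa * A * Saᴴ)).det.re} =
      sSup {x : ℝ | ∃ Sr : Matrix (Fin N ⊕ Fin N) (Fin K) ℝ,
        (∀ k, (Srᵀ k) ⬝ᵥ (Srᵀ k) = 1) ∧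
        x = ((1 : Matrix (Fin N ⊕ Fin N) (Fin N ⊕ Fin N) ℝ) +
          σ2⁻¹ • (Sr * Ar * Srᵀ)).det} ∧
    sSup {x : ℝ | ∃ Sa ∈ AugSigSet N K,
        x = Real.log ((1 : Matrix (Fin N ⊕ Fin N) (Fin N ⊕ Fin N) ℂ) +
          ((σ2 : ℂ))⁻¹ • (Sa * A * Saᴴ)).det.re} =
      2 * sSup {x : ℝ | ∃ Sr : Matrix (Fin N ⊕ Fin N) (Fin K) ℝ,
        (∀ k, (Srᵀ k) ⬝ᵥ (Srᵀ k) = 1) ∧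
        x = (1 / 2) * Real.log ((1 : Matrix (Fin N ⊕ Fin N) (Fin N ⊕ Fin N) ℝ) +
          σ2⁻¹ • (Sr * Ar * Srᵀ)).det} := by
  have hAmap : Ar.map Complex.ofReal = A := by
    rw [hAr, hA, Matrix.diagonal_map (by simp)]
    congr 1
    funext j
    push_cast
    ring
  have hset : {x : ℝ | ∃ Sa ∈ AugSigSet N K,
        x = ((1 : Matrix (Fin N ⊕ Fin N) (Fin N ⊕ Fin N) ℂ) +
          ((σ2 : ℂ))⁻¹ • (Sa * A * Saᴴ)).det.re} =
      {x : ℝ | ∃ Sr : Matrix (Fin N ⊕ Fin N) (Fin K) ℝ,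
        (∀ k, (Srᵀ k) ⬝ᵥ (Srᵀ k) = 1) ∧
        x = ((1 : Matrix (Fin N ⊕ Fin N) (Fin N ⊕ Fin N) ℝ) +
          σ2⁻¹ • (Sr * Ar * Srᵀ)).det} := by
    ext x
    simp only [Set.mem_setOf_eq]
    constructor
    · rintro ⟨Sa, hSa, rfl⟩
      obtain ⟨Sr, hcols, hSr⟩ := exists_real_of_aug Sa hSa
      have hd := det_re_eq Sr Ar Sa hSr σ2
      rw [hAmap] at hd
      exact ⟨Sr, hcols, hd⟩
    · rintro ⟨Sr, hcols, rfl⟩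
      refine ⟨(UWL N)ᴴ * (Sr.map Complex.ofReal), aug_of_real Sr hcols, ?_⟩
      have hd := det_re_eq Sr Ar ((UWL N)ᴴ * (Sr.map Complex.ofReal)) rfl σ2
      rw [hAmap] at hd
      exact hd.symm
  refine ⟨by rw [hset], ?_⟩
  have hL : {x : ℝ | ∃ Sa ∈ AugSigSet N K,
        x = Real.log ((1 : Matrix (Fin N ⊕ Fin N) (Fin N ⊕ Fin N) ℂ) +
          ((σ2 : ℂ))⁻¹ • (Sa * A * Saᴴ)).det.re} =
      Real.log '' {x : ℝ | ∃ Sa ∈ AugSigSet N K,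
        x = ((1 : Matrix (Fin N ⊕ Fin N) (Fin N ⊕ Fin N) ℂ) +
          ((σ2 : ℂ))⁻¹ • (Sa * A * Saᴴ)).det.re} := by
    ext x
    simp only [Set.mem_image, Set.mem_setOf_eq]
    constructor
    · rintro ⟨Sa, hSa, rfl⟩
      exact ⟨_, ⟨Sa, hSa, rfl⟩, rfl⟩
    · rintro ⟨t, ⟨Sa, hSa, rfl⟩, rfl⟩
      exact ⟨Sa, hSa, rfl⟩
  have hR : {x : ℝ | ∃ Sr : Matrix (Fin N ⊕ Fin N) (Fin K) ℝ,
        (∀ k, (Srᵀ k) ⬝ᵥ (Srᵀ k) = 1) ∧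
        x = (1 / 2) * Real.log ((1 : Matrix (Fin N ⊕ Fin N) (Fin N ⊕ Fin N) ℝ) +
          σ2⁻¹ • (Sr * Ar * Srᵀ)).det} =
      ((1 : ℝ)/2) • (Real.log '' {x : ℝ | ∃ Sr : Matrix (Fin N ⊕ Fin N) (Fin K) ℝ,
        (∀ k, (Srᵀ k) ⬝ᵥ (Srᵀ k) = 1) ∧
        x = ((1 : Matrix (Fin N ⊕ Fin N) (Fin N ⊕ Fin N) ℝ) +
          σ2⁻¹ • (Sr * Ar * Srᵀ)).det}) := by
    ext x
    simp only [Set.mem_smul_set, Set.mem_image, Set.mem_setOf_eq]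
    constructor
    · rintro ⟨Sr, hc, rfl⟩
      exact ⟨_, ⟨_, ⟨Sr, hc, rfl⟩, rfl⟩, by simp [smul_eq_mul]⟩
    · rintro ⟨y, ⟨t, ⟨Sr, hc, rfl⟩, rfl⟩, rfl⟩
      exact ⟨Sr, hc, by simp [smul_eq_mul]⟩
  rw [hL, hset, hR, Real.sSup_smul_of_nonneg (by norm_num : (0:ℝ) ≤ 1/2), smul_eq_mul]
  ring
end
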